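/- Let f be a monic polynomial of degree n ≥ 2 over K with |n| = 1 and all coefficients of f in O_K. Then I(f) = 1 if and only if the reduction f̄ ∈ (O_K/m_K)[z] does NOT divide (f̄')^n in (O_K/m_K)[z], where f̄ and f̄' are the images of f and of its derivative f' under coefficientwise reduction modulo m_K. -/

import Mathlib

open Polynomial




lemma nonarch_sum_le {K : Type*} [Field K] {v : AbsoluteValue K ℝ}
    (hna : IsNonarchimedean v) {ι : Type*} (s : Finset ι) (g : ι → K) {B : ℝ}
    (hB : 0 ≤ B) (h : ∀ i ∈ s, v (g i) ≤ B) : v (∑ i ∈ s, g i) ≤ B := by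
  classical
  induction s using Finset.induction with
  | empty => simpa using hB
  | @insert x s hx ih =>
    rw [Finset.sum_insert hx]
    exact le_trans (hna _ _) (max_le (h _ (Finset.mem_insert_self _ _))
      (ih fun i hi => h i (Finset.mem_insert_of_mem hi)))

lemma root_bound {K : Type*} [Field K] {v : AbsoluteValue K ℝ}
    (hna : IsNonarchimedean v) {g : Polynomial K}
    (hl : v g.leadingCoeff = 1) (hc : ∀ i, v (g.coeff i) ≤ 1)
    {z : K} (hz : g.eval z = 0) : v z ≤ 1 := by
  by_contra hgt
  push_neg at hgt
  set d := g.natDegree with hd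
  have hd1 : 1 ≤ d := by
    by_contra h0
    push_neg at h0
    have hd0 : d = 0 := by omega
    have hg : g = Polynomial.C (g.coeff 0) := Polynomial.eq_C_of_natDegree_eq_zero hd0
    have hcoe : g.coeff 0 = 0 := by rw [hg] at hz; simpa using hz
    rw [Polynomial.leadingCoeff, ← hd, hd0, hcoe] at hl
    simp at hl
  have h0 : ∑ i ∈ Finset.range d, g.coeff i * z ^ i + g.coeff d * z ^ d = 0 := by
    rw [← Finset.sum_range_succ, ← Polynomial.eval_eq_sum_range, hz]
  have hsum : g.coeff d * z ^ d = -∑ i ∈ Finset.range d, g.coeff i * z ^ i :=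
    eq_neg_of_add_eq_zero_right h0
  have hv1 : (1 : ℝ) ≤ v z := le_of_lt hgt
  have key : v z ^ d ≤ v z ^ (d - 1) := by
    have h1 : v (g.coeff d * z ^ d) = v z ^ d := by
      rw [v.map_mul, v.map_pow, show g.coeff d = g.leadingCoeff from rfl, hl, one_mul]
    rw [← h1, hsum, v.map_neg]
    apply nonarch_sum_le hna
    · exact pow_nonneg (v.nonneg z) _
    · intro i hi
      rw [v.map_mul, v.map_pow]
      calc v (g.coeff i) * v z ^ i ≤ 1 * v z ^ i :=
            mul_le_mul_of_nonneg_right (hc i) (pow_nonneg (v.nonneg z) _)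
        _ = v z ^ i := one_mul _
        _ ≤ v z ^ (d - 1) := pow_le_pow_right₀ hv1 (by simp at hi; omega)
  have := (pow_le_pow_iff_right₀ hgt).mp key
  omega

lemma map_prod_XsubC {A B : Type*} [CommRing A] [CommRing B] (phi : A →+* B) (s : Multiset A) :
    ((s.map fun a => Polynomial.X - Polynomial.C a).prod).map phi
      = ((s.map phi).map fun b => Polynomial.X - Polynomial.C b).prod := by
  rw [Polynomial.map_multiset_prod, Multiset.map_map, Multiset.map_map]
  congr 1
  apply Multiset.map_congr rfl
  intro a _
  simp



/-- The valuation ring `O_K = {x : K | v x ≤ 1}` of a non-archimedean absolute value. -/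
def valRing {K : Type*} [Field K] (v : AbsoluteValue K ℝ)
    (hna : IsNonarchimedean v) : Subring K where
  carrier := {x : K | v x ≤ 1}
  zero_mem' := by simp
  one_mem' := by simp [v.map_one]
  add_mem' := fun {a b} ha hb => le_trans (hna a b) (max_le ha hb)
  mul_mem' := fun {a b} ha hb => by
    simp only [Set.mem_setOf_eq, v.map_mul] at *
    exact mul_le_one₀ ha (v.nonneg b) hb
  neg_mem' := fun {a} ha => by simpa [v.map_neg] using ha

/-- The maximal ideal `m_K = {x : O_K | v x < 1}` of the valuation ring. -/
def maxIdeal {K : Type*} [Field K] (v : AbsoluteValue K ℝ)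
    (hna : IsNonarchimedean v) : Ideal (valRing v hna) where
  carrier := {x : valRing v hna | v (x : K) < 1}
  zero_mem' := by simp
  add_mem' := fun {a b} ha hb => lt_of_le_of_lt (hna _ _) (max_lt ha hb)
  smul_mem' := fun c x hx => by
    simp only [Set.mem_setOf_eq, smul_eq_mul, Subring.coe_mul, v.map_mul] at *
    calc v (c : K) * v (x : K) ≤ 1 * v (x : K) :=
          mul_le_mul_of_nonneg_right c.2 (v.nonneg _)
      _ = v (x : K) := one_mul _
      _ < 1 := hx

/-- `I(f) = max_{z : f(z)=0} min_{w : f'(w)=0} |z - w|`, expressed via `sSup`/`sInf`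
(for the polynomials appearing in the statements these sets are finite and nonempty,
so `sSup`/`sInf` are the maximum/minimum). -/
noncomputable def sendovI {K : Type*} [Field K] (v : AbsoluteValue K ℝ)
    (f : Polynomial K) : ℝ :=
  sSup ((fun z => sInf ((fun w => v (z - w)) '' {w : K | (Polynomial.derivative f).IsRoot w})) ''
    {z : K | f.IsRoot z})

set_option maxHeartbeats 1000000 in
/-- Optimality criterion when `|n| = 1`: a monic polynomial `f` of degree `n ≥ 2` with
coefficients in `O_K` satisfies `I(f) = 1` iff the reduction `f̄` modulo the maximal ideal
does not divide `(f̄')^n` in `(O_K/m_K)[z]`. -/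
theorem optimal_bound_iff_not_dvd {K : Type*} [Field K] [IsAlgClosed K] [CharZero K]
    (v : AbsoluteValue K ℝ) (hna : IsNonarchimedean v)
    (n : ℕ) (hn : 2 ≤ n) (hunit : v ((n : K)) = 1)
    (f : Polynomial (valRing v hna)) (hmonic : f.Monic) (hdeg : f.natDegree = n) :
    sendovI v (f.map (valRing v hna).subtype) = 1 ↔
      ¬ (f.map (Ideal.Quotient.mk (maxIdeal v hna)) ∣
          (Polynomial.derivative (f.map (Ideal.Quotient.mk (maxIdeal v hna)))) ^ n) := by
  classical
  set m := maxIdeal v hna with hm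
  set σ := (valRing v hna).subtype with hσ
  have hσinj : Function.Injective σ := Subtype.val_injective
  set q := Ideal.Quotient.mk m with hq
  set F : Polynomial K := f.map σ with hF
  -- basic facts about F
  have hFmonic : F.Monic := hmonic.map σ
  have hFdeg : F.natDegree = n := by
    rw [hF, Polynomial.natDegree_map_eq_of_injective hσinj, hdeg]
  have hF0 : F ≠ 0 := hFmonic.ne_zero
  have hnK : (n : K) ≠ 0 := Nat.cast_ne_zero.mpr (by omega)
  set D := Polynomial.derivative F with hD
  have hDmap : D = (Polynomial.derivative f).map σ := by
    rw [hD, hF, Polynomial.derivative_map]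
  -- leading coefficient of D
  have hFcoeffn : F.coeff n = 1 := by
    have := hFmonic.leadingCoeff
    rwa [Polynomial.leadingCoeff, hFdeg] at this
  have hDcoeff : D.coeff (n - 1) = (n : K) := by
    rw [hD, Polynomial.coeff_derivative, show n - 1 + 1 = n by omega, hFcoeffn, one_mul]
    push_cast [show (1:ℕ) ≤ n by omega]
    ring
  have hDdeg : D.natDegree = n - 1 := by
    refine le_antisymm ?_ (Polynomial.le_natDegree_of_ne_zero (by rw [hDcoeff]; exact hnK))
    rw [← hFdeg]; exact Polynomial.natDegree_derivative_le F
  have hDlead : D.leadingCoeff = (n : K) := by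
    rw [Polynomial.leadingCoeff, hDdeg, hDcoeff]
  have hD0 : D ≠ 0 := fun h => hnK (by rw [← hDlead, h]; simp)
  -- coefficient bounds
  have hFcoeff : ∀ i, v (F.coeff i) ≤ 1 := fun i => by
    rw [hF, Polynomial.coeff_map]; exact (f.coeff i).2
  have hDcoeffle : ∀ i, v (D.coeff i) ≤ 1 := fun i => by
    rw [hDmap, Polynomial.coeff_map]; exact ((Polynomial.derivative f).coeff i).2
  -- roots
  set Z := F.roots with hZ
  set W := D.roots with hW
  have hFsplits : F.Splits := IsAlgClosed.splits F
  have hDsplits : D.Splits := IsAlgClosed.splits D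
  have hZcard : Z.card = n := by
    rw [hZ, Polynomial.splits_iff_card_roots.mp hFsplits, hFdeg]
  have hWcard : W.card = n - 1 := by
    rw [hW, Polynomial.splits_iff_card_roots.mp hDsplits, hDdeg]
  have hFfact : F = (Z.map fun a => Polynomial.X - Polynomial.C a).prod :=
    hFsplits.eq_prod_roots_of_monic hFmonic
  have hDfact : D = Polynomial.C (n : K) * (W.map fun a => Polynomial.X - Polynomial.C a).prod := by
    rw [← hDlead]
    exact hDsplits.eq_prod_roots
  have hZle : ∀ z ∈ Z, v z ≤ 1 := fun z hz =>
    root_bound hna (by rw [hFmonic.leadingCoeff]; exact v.map_one) hFcoeff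
      ((Polynomial.mem_roots'.mp hz).2)
  have hWle : ∀ w ∈ W, v w ≤ 1 := fun w hw =>
    root_bound hna (by rw [hDlead]; exact hunit) hDcoeffle ((Polynomial.mem_roots'.mp hw).2)
  -- lift roots to the valuation ring
  set Z' : Multiset (valRing v hna) :=
    Z.attach.map (fun z => (⟨z.1, hZle z.1 z.2⟩ : valRing v hna)) with hZ'
  set W' : Multiset (valRing v hna) :=
    W.attach.map (fun w => (⟨w.1, hWle w.1 w.2⟩ : valRing v hna)) with hW'
  have hZ'map : Z'.map σ = Z := by
    rw [hZ', Multiset.map_map]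
    exact Multiset.attach_map_val Z
  have hW'map : W'.map σ = W := by
    rw [hW', Multiset.map_map]
    exact Multiset.attach_map_val W
  have hZ'card : Z'.card = n := by
    rw [hZ', Multiset.card_map, Multiset.card_attach, hZcard]
  -- factor f over the valuation ring
  have hffact : f = (Z'.map fun a => Polynomial.X - Polynomial.C a).prod := by
    apply Polynomial.map_injective σ hσinj
    rw [← hF, map_prod_XsubC, hZ'map]
    exact hFfact
  have hnR : σ ((n : ℕ) : valRing v hna) = (n : K) := map_natCast σ n
  have hdfact : Polynomial.derivative f
      = Polynomial.C ((n : ℕ) : valRing v hna) * (W'.map fun a => Polynomial.X - Polynomial.C a).prod := by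
    apply Polynomial.map_injective σ hσinj
    rw [Polynomial.map_mul, Polynomial.map_C, hnR, map_prod_XsubC, hW'map, ← hDmap]
    exact hDfact
  -- reductions
  set Zb := Z'.map q with hZb
  set Wb := W'.map q with hWb
  have hfbar : f.map q = (Zb.map fun a => Polynomial.X - Polynomial.C a).prod := by
    rw [hffact, map_prod_XsubC, ← hZb]
  have hdbar : Polynomial.derivative (f.map q)
      = Polynomial.C (q ((n : ℕ) : valRing v hna)) * (Wb.map fun a => Polynomial.X - Polynomial.C a).prod := by
    rw [Polynomial.derivative_map, hdfact, Polynomial.map_mul, Polynomial.map_C,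
      map_prod_XsubC, ← hWb]
  have hqn : q ((n : ℕ) : valRing v hna) ≠ 0 := by
    rw [hq, Ne, Ideal.Quotient.eq_zero_iff_mem]
    intro hmm
    have hlt : v ((((n : ℕ) : valRing v hna)) : K) < 1 := hmm
    rw [show ((((n : ℕ) : valRing v hna)) : K) = (n : K) from hnR, hunit] at hlt
    exact lt_irrefl _ hlt
  -- the maximal ideal is maximal
  have hmax : m.IsMaximal := by
    rw [Ideal.isMaximal_iff]
    constructor
    · intro h
      have h1 : v (((1 : valRing v hna)) : K) < 1 := h
      rw [OneMemClass.coe_one, v.map_one] at h1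
      exact lt_irrefl _ h1
    · intro J x hle hxm hxJ
      have hx1 : v (x : K) = 1 := le_antisymm x.2 (not_lt.mp hxm)
      have hx0 : (x : K) ≠ 0 := by
        intro h; rw [h, v.map_zero] at hx1; norm_num at hx1
      have hinv : v ((x : K)⁻¹) ≤ 1 := by
        rw [map_inv₀, hx1]; norm_num
      have hmul : (⟨(x : K)⁻¹, hinv⟩ : valRing v hna) * x = 1 := by
        ext
        push_cast
        exact inv_mul_cancel₀ hx0
      rw [← hmul]
      exact J.mul_mem_left _ hxJ
  haveI : m.IsMaximal := hmax
  haveI : IsDomain ((valRing v hna) ⧸ m) := Ideal.Quotient.isDomain m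
  -- evaluation of fbar at elements of Zb is zero
  have hdvd_iff : (f.map q ∣ (Polynomial.derivative (f.map q)) ^ n) ↔ ∀ a ∈ Zb, a ∈ Wb := by
    constructor
    · intro hdvd a ha
      have hfa : (f.map q).eval a = 0 := by
        rw [hfbar, Polynomial.eval_multiset_prod, Multiset.map_map]
        apply Multiset.prod_eq_zero
        refine Multiset.mem_map.mpr ⟨a, ha, ?_⟩
        simp
      have hda : ((Polynomial.derivative (f.map q)) ^ n).eval a = 0 := by
        obtain ⟨c, hc⟩ := hdvd
        rw [hc, Polynomial.eval_mul, hfa, zero_mul]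
      rw [Polynomial.eval_pow, pow_eq_zero_iff (by omega : n ≠ 0)] at hda
      rw [hdbar, Polynomial.eval_mul, Polynomial.eval_C, mul_eq_zero] at hda
      rcases hda with h | h
      · exact absurd h hqn
      · rw [Polynomial.eval_multiset_prod, Multiset.map_map, Multiset.prod_eq_zero_iff] at h
        obtain ⟨b, hb, hb0⟩ := Multiset.mem_map.mp h
        simp only [Function.comp_apply, Polynomial.eval_sub, Polynomial.eval_X,
          Polynomial.eval_C, sub_eq_zero] at hb0
        rwa [← hb0] at hb
    · intro hall
      have heach : ∀ a ∈ Zb, (Polynomial.X - Polynomial.C a) ∣ Polynomial.derivative (f.map q) := by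
        intro a ha
        rw [hdbar]
        exact Dvd.dvd.mul_left (α := Polynomial ((valRing v hna) ⧸ m))
          (Multiset.dvd_prod (Multiset.mem_map_of_mem _ (hall a ha))) _
      have h1 : f.map q ∣ (Zb.map fun _ => Polynomial.derivative (f.map q)).prod := by
        calc f.map q = (Zb.map fun a => Polynomial.X - Polynomial.C a).prod := hfbar
          _ ∣ _ := Multiset.prod_dvd_prod_of_dvd _ _ heach
      rwa [Multiset.map_const', Multiset.prod_replicate, hZb, Multiset.card_map, hZ'card] at h1
  -- analytic side
  have hSZ : ∀ z, F.IsRoot z ↔ z ∈ Z := fun z =>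
    ⟨fun h => Polynomial.mem_roots'.mpr ⟨hF0, h⟩, fun h => (Polynomial.mem_roots'.mp h).2⟩
  have hTW : ∀ w, D.IsRoot w ↔ w ∈ W := fun w =>
    ⟨fun h => Polynomial.mem_roots'.mpr ⟨hD0, h⟩, fun h => (Polynomial.mem_roots'.mp h).2⟩
  have hSfin : {z : K | F.IsRoot z}.Finite :=
    Set.Finite.ofFinset Z.toFinset (fun z => by rw [Multiset.mem_toFinset]; exact (hSZ z).symm)
  have hTfin : {w : K | D.IsRoot w}.Finite :=
    Set.Finite.ofFinset W.toFinset (fun w => by rw [Multiset.mem_toFinset]; exact (hTW w).symm)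
  have hSne : {z : K | F.IsRoot z}.Nonempty :=
    IsAlgClosed.exists_root F (Polynomial.degree_ne_of_natDegree_ne (n := 0) (by rw [hFdeg]; omega))
  have hTne : {w : K | D.IsRoot w}.Nonempty :=
    IsAlgClosed.exists_root D (Polynomial.degree_ne_of_natDegree_ne (n := 0) (by rw [hDdeg]; omega))
  have hsub : ∀ z w : K, v z ≤ 1 → v w ≤ 1 → v (z - w) ≤ 1 := fun z w hz hw => by
    rw [sub_eq_add_neg]
    exact le_trans (hna _ _) (max_le hz (by rwa [v.map_neg]))
  set Inner : K → ℝ := fun z => sInf ((fun w => v (z - w)) '' {w : K | D.IsRoot w}) with hInner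
  have hInne : ∀ z : K, ((fun w => v (z - w)) '' {w : K | D.IsRoot w}).Nonempty :=
    fun z => hTne.image _
  have hInfin : ∀ z : K, ((fun w => v (z - w)) '' {w : K | D.IsRoot w}).Finite :=
    fun z => hTfin.image _
  have hIle : ∀ z ∈ {z : K | F.IsRoot z}, Inner z ≤ 1 := by
    intro z hz
    obtain ⟨w0, hw0⟩ := hTne
    refine le_trans (csInf_le (hInfin z).bddBelow ⟨w0, hw0, rfl⟩) ?_
    exact hsub _ _ (hZle z ((hSZ z).mp hz)) (hWle w0 ((hTW w0).mp hw0))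
  have hIeq : ∀ z ∈ {z : K | F.IsRoot z},
      (Inner z = 1 ↔ ∀ w ∈ {w : K | D.IsRoot w}, v (z - w) = 1) := by
    intro z hz
    constructor
    · intro h1 w hw
      refine le_antisymm (hsub _ _ (hZle z ((hSZ z).mp hz)) (hWle w ((hTW w).mp hw))) ?_
      rw [← h1]
      exact csInf_le (hInfin z).bddBelow ⟨w, hw, rfl⟩
    · intro hall
      refine le_antisymm (hIle z hz) ?_
      exact le_csInf (hInne z) (by rintro b ⟨w, hw, rfl⟩; exact (hall w hw).ge)
  set A := Inner '' {z : K | F.IsRoot z} with hA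
  have hAne : A.Nonempty := hSne.image _
  have hAfin : A.Finite := hSfin.image _
  have hsendov : sendovI v (f.map (valRing v hna).subtype) = sSup A := rfl
  have hsup_le : sSup A ≤ 1 := csSup_le hAne (by rintro a ⟨z, hz, rfl⟩; exact hIle z hz)
  have hLHS : sSup A = 1 ↔ ∃ z ∈ {z : K | F.IsRoot z}, Inner z = 1 := by
    constructor
    · intro h
      obtain ⟨z, hz, hzeq⟩ := Set.Nonempty.csSup_mem hAne hAfin
      exact ⟨z, hz, by rw [hzeq, h]⟩
    · rintro ⟨z, hz, hzeq⟩
      refine le_antisymm hsup_le ?_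
      rw [← hzeq]
      exact le_csSup hAfin.bddAbove ⟨z, hz, rfl⟩
  have hbridge : (∃ z ∈ {z : K | F.IsRoot z}, ∀ w ∈ {w : K | D.IsRoot w}, v (z - w) = 1)
      ↔ ∃ a ∈ Zb, a ∉ Wb := by
    constructor
    · rintro ⟨z, hz, hall⟩
      have hzZ : z ∈ Z := (hSZ z).mp hz
      refine ⟨q ⟨z, hZle z hzZ⟩, ?_, ?_⟩
      · rw [hZb, hZ']
        exact Multiset.mem_map_of_mem _
          (Multiset.mem_map_of_mem _ (Multiset.mem_attach Z ⟨z, hzZ⟩))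
      · intro hmem
        rw [hWb, hW', Multiset.map_map] at hmem
        obtain ⟨w', _, heq⟩ := Multiset.mem_map.mp hmem
        have hqe : q (⟨z, hZle z hzZ⟩ : valRing v hna) = q ⟨w'.1, hWle w'.1 w'.2⟩ := heq.symm
        rw [hq, Ideal.Quotient.eq] at hqe
        have hvlt : v (((⟨z, hZle z hzZ⟩ - ⟨w'.1, hWle w'.1 w'.2⟩ : valRing v hna)) : K) < 1 := hqe
        have hzw : v (z - w'.1) < 1 := by simpa using hvlt
        have hone : v (z - w'.1) = 1 := hall w'.1 ((hTW w'.1).mpr w'.2)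
        rw [hone] at hzw
        exact lt_irrefl _ hzw
    · rintro ⟨a, ha, hnb⟩
      rw [hZb, hZ', Multiset.map_map] at ha
      obtain ⟨z', _, rfl⟩ := Multiset.mem_map.mp ha
      refine ⟨z'.1, (hSZ z'.1).mpr z'.2, ?_⟩
      intro w hw
      have hwW : w ∈ W := (hTW w).mp hw
      refine le_antisymm (hsub _ _ (hZle _ z'.2) (hWle _ hwW)) ?_
      by_contra hlt
      push_neg at hlt
      apply hnb
      have hqe : ((Function.comp ⇑q fun z => (⟨z.1, hZle z.1 z.2⟩ : valRing v hna)) z')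
          = q (⟨w, hWle w hwW⟩ : valRing v hna) := by
        show q (⟨z'.1, hZle z'.1 z'.2⟩ : valRing v hna) = q ⟨w, hWle w hwW⟩
        rw [hq, Ideal.Quotient.eq]
        show v (((⟨z'.1, hZle z'.1 z'.2⟩ - ⟨w, hWle w hwW⟩ : valRing v hna)) : K) < 1
        simpa using hlt
      rw [hqe, hWb, hW']
      exact Multiset.mem_map_of_mem _
        (Multiset.mem_map_of_mem _ (Multiset.mem_attach W ⟨w, hwW⟩))
  rw [hsendov, hLHS]
  have hfinal : (∃ z ∈ {z : K | F.IsRoot z}, Inner z = 1) ↔ ∃ a ∈ Zb, a ∉ Wb := by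
    rw [← hbridge]
    exact exists_congr fun z => and_congr_right fun hz => hIeq z hz
  rw [hfinal]
  constructor
  · rintro ⟨a, ha, hnb⟩ hdvd
    exact hnb (hdvd_iff.mp hdvd a ha)
  · intro h
    by_contra hne
    push_neg at hne
    exact h (hdvd_iff.mpr hne)
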